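/- The graph G* produced by the vertex-cover reduction is a 1-star caterpillar convex bipartite graph: for a graph G with n vertices and m edges, G* has X* = V_2 ∪ V_3 and Y* = V_1, where V_1 = {x_i : v_i ∈ V(G)}, V_2 = {y_{i1}, y_{i2} : e_i ∈ E(G)}, V_3 = {z_{i1}, z_{i2} : e_i ∈ E(G)}, each x_i is adjacent to all of V_3 and to y_{i1}, y_{i2} for exactly those edges e_i incident on v_i; then there exists a 1-star caterpillar T on X* with backbone V_3 and pendants V_2 such that for every x ∈ Y*, N_{G*}(x) induces a subtree of T. -/

import Mathlib

section Helpers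

variable {m : ℕ}

/-- The caterpillar relation. -/
def crel (m : ℕ) (u v : (Fin m × Fin 2) ⊕ (Fin m × Fin 2)) : Prop :=
  (∃ s t : Fin m × Fin 2, u = .inr s ∧ v = .inr t ∧
      2 * (s.1 : ℕ) + (s.2 : ℕ) + 1 = 2 * (t.1 : ℕ) + (t.2 : ℕ)) ∨
    (∃ s : Fin m × Fin 2, u = .inl s ∧ v = .inr s)

/-- level of a pair -/
def lvl (s : Fin m × Fin 2) : ℕ := 2 * (s.1 : ℕ) + (s.2 : ℕ)

lemma lvl_inj {s t : Fin m × Fin 2} (h : lvl s = lvl t) : s = t := by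
  unfold lvl at h
  have h2 := s.2.isLt; have h2' := t.2.isLt
  have : (s.1 : ℕ) = t.1 ∧ (s.2 : ℕ) = t.2 := by omega
  ext
  · exact this.1
  · exact this.2

lemma lvl_lt (s : Fin m × Fin 2) : lvl s < 2 * m := by
  have := s.1.isLt; have := s.2.isLt; unfold lvl; omega

/-- decode a level -/
def dec (m : ℕ) (k : ℕ) (hk : k < 2 * m) : Fin m × Fin 2 :=
  (⟨k / 2, by omega⟩, ⟨k % 2, by omega⟩)

lemma lvl_dec (k : ℕ) (hk : k < 2 * m) : lvl (dec m k hk) = k := by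
  unfold lvl dec; simp; omega

/-- walk-invariant transport -/
lemma reach_pres {V : Type*} {G : SimpleGraph V} (P : V → Prop)
    (h : ∀ a b, G.Adj a b → P a → P b) {a b : V} (hr : G.Reachable a b) : P a → P b := by
  obtain ⟨w⟩ := hr
  induction w with
  | nil => exact id
  | cons ha _ ih => exact fun p => ih (h _ _ ha p)

lemma crel_adj {u v : (Fin m × Fin 2) ⊕ (Fin m × Fin 2)} (h : crel m u v) :
    (SimpleGraph.fromRel (crel m)).Adj u v := by
  rw [SimpleGraph.fromRel_adj]
  refine ⟨?_, Or.inl h⟩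
  rcases h with ⟨s, t, rfl, rfl, hst⟩ | ⟨s, rfl, rfl⟩
  · intro he; rw [Sum.inr.injEq] at he; subst he; omega
  · simp

/-- connectivity of any induced subgraph containing all of the backbone -/
lemma induce_connected (hm : 1 ≤ m) (S : Set ((Fin m × Fin 2) ⊕ (Fin m × Fin 2)))
    (hS : ∀ s, Sum.inr s ∈ S) :
    ((SimpleGraph.fromRel (crel m)).induce S).Connected := by
  set G := SimpleGraph.fromRel (crel m) with hG
  set s0 : Fin m × Fin 2 := (⟨0, hm⟩, 0) with hs0
  have hls0 : lvl s0 = 0 := by simp [lvl, hs0]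
  -- reachability to root by strong induction on level
  have key : ∀ k : ℕ, ∀ s : Fin m × Fin 2, lvl s = k →
      (G.induce S).Reachable ⟨.inr s, hS s⟩ ⟨.inr s0, hS s0⟩ := by
    intro k
    induction k using Nat.strong_induction_on with
    | _ k ih =>
      intro s hs
      rcases Nat.eq_zero_or_pos k with hk0 | hkpos
      · have : s = s0 := lvl_inj (by rw [hs, hls0, hk0])
        subst this; exact SimpleGraph.Reachable.refl _
      · obtain ⟨k', rfl⟩ := Nat.exists_eq_add_of_lt hkpos
        simp only [Nat.zero_add] at *
        have hk' : k' < 2 * m := by have := lvl_lt s; omega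
        set t := dec m k' hk' with ht
        have hlt : lvl t = k' := lvl_dec k' hk'
        have hadj : G.Adj (.inr t) (.inr s) :=
          crel_adj (Or.inl ⟨t, s, rfl, rfl, by
            show lvl t + 1 = lvl s
            omega⟩)
        have hadj' : (G.induce S).Adj ⟨.inr t, hS t⟩ ⟨.inr s, hS s⟩ := hadj
        exact (hadj'.symm.reachable).trans (ih k' (by omega) t hlt)
  rw [SimpleGraph.connected_iff]
  refine ⟨?_, ⟨⟨.inr s0, hS s0⟩⟩⟩
  intro u v
  have hroot : ∀ u : ↥S, (G.induce S).Reachable u ⟨.inr s0, hS s0⟩ := by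
      rintro ⟨(p | q), hu⟩
      · have hadj : G.Adj (.inl p) (.inr p) := crel_adj (Or.inr ⟨p, rfl, rfl⟩)
        have hadj' : (G.induce S).Adj ⟨.inl p, hu⟩ ⟨.inr p, hS p⟩ := hadj
        exact hadj'.reachable.trans (key (lvl p) p rfl)
      · exact key (lvl q) q rfl
  exact (hroot u).trans (hroot v).symm

end Helpers

section Acyclic

variable {m : ℕ}

lemma pendant_only_nbr {s : Fin m × Fin 2} {x} (h : (SimpleGraph.fromRel (crel m)).Adj (.inl s) x) :
    x = .inr s := by
  rw [SimpleGraph.fromRel_adj] at h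
  obtain ⟨-, h | h⟩ := h
  · rcases h with ⟨u, w, h1, -, -⟩ | ⟨u, h1, h2⟩
    · exact absurd h1 (by simp)
    · rw [Sum.inl.injEq] at h1; subst h1; exact h2
  · rcases h with ⟨u, w, -, h2, -⟩ | ⟨u, -, h2⟩ <;> exact absurd h2 (by simp)

lemma bridge_pendant (s : Fin m × Fin 2) :
    (SimpleGraph.fromRel (crel m)).IsBridge s(.inl s, .inr s) := by
  rw [SimpleGraph.isBridge_iff]
  rintro ⟨w⟩
  cases w with
  | cons h _ =>
    rw [SimpleGraph.deleteEdges, SimpleGraph.sdiff_adj] at h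
    obtain ⟨h1, h2⟩ := h
    have := pendant_only_nbr h1
    subst this
    exact h2 (by rw [SimpleGraph.fromEdgeSet_adj]; exact ⟨rfl, by simp⟩)

lemma crel_pres {s t : Fin m × Fin 2} (hst : lvl s + 1 = lvl t)
    {a b : (Fin m × Fin 2) ⊕ (Fin m × Fin 2)} (hc : crel m a b)
    (hne : s(a, b) ≠ s(Sum.inr s, Sum.inr t)) :
    (Sum.elim lvl lvl a ≤ lvl s ↔ Sum.elim lvl lvl b ≤ lvl s) := by
  rcases hc with ⟨u, w, rfl, rfl, huw⟩ | ⟨u, rfl, rfl⟩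
  · have huw' : lvl u + 1 = lvl w := huw
    simp only [Sum.elim_inr]
    constructor
    · intro h
      by_contra hw
      have hu : lvl u = lvl s := by omega
      have hw' : lvl w = lvl t := by omega
      have := lvl_inj hu; have := lvl_inj hw'
      subst this; subst this
      exact hne rfl
    · intro h; omega
  · simp

lemma bridge_backbone {s t : Fin m × Fin 2} (hst : lvl s + 1 = lvl t) :
    (SimpleGraph.fromRel (crel m)).IsBridge s(Sum.inr s, Sum.inr t) := by
  rw [SimpleGraph.isBridge_iff]
  intro hr
  have hpres : ∀ a b, ((SimpleGraph.fromRel (crel m)) \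
      SimpleGraph.fromEdgeSet {s(Sum.inr s, Sum.inr t)}).Adj a b →
      (Sum.elim lvl lvl a ≤ lvl s → Sum.elim lvl lvl b ≤ lvl s) := by
    intro x y hxy
    rw [SimpleGraph.sdiff_adj] at hxy
    obtain ⟨h1, h2⟩ := hxy
    rw [SimpleGraph.fromEdgeSet_adj] at h2
    push_neg at h2
    have hne : s(x, y) ≠ s(Sum.inr s, Sum.inr t) := by
      intro he; exact absurd (h2 (by simpa using he)) (by simp [h1.ne])
    rw [SimpleGraph.fromRel_adj] at h1
    obtain ⟨-, hc | hc⟩ := h1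
    · exact (crel_pres hst hc hne).mp
    · exact (crel_pres hst hc (by rwa [Sym2.eq_swap])).mpr
  have := reach_pres _ hpres hr (by simp)
  simp only [Sum.elim_inr] at this
  omega

lemma caterpillar_isTree (hm : 1 ≤ m) : (SimpleGraph.fromRel (crel m)).IsTree := by
  constructor
  · rw [← (SimpleGraph.induceUnivIso (SimpleGraph.fromRel (crel m))).connected_iff]
    exact induce_connected hm Set.univ (fun _ => trivial)
  · rw [SimpleGraph.isAcyclic_iff_forall_adj_isBridge]
    intro v w hvw
    rw [SimpleGraph.fromRel_adj] at hvw
    obtain ⟨-, hc | hc⟩ := hvw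
    · rcases hc with ⟨u, w', rfl, rfl, h⟩ | ⟨u, rfl, rfl⟩
      · exact bridge_backbone h
      · exact bridge_pendant u
    · rw [Sym2.eq_swap]
      rcases hc with ⟨u, w', rfl, rfl, h⟩ | ⟨u, rfl, rfl⟩
      · exact bridge_backbone h
      · exact bridge_pendant u

end Acyclic
def IsSteinerSet {V : Type*} (G : SimpleGraph V) (R S : Set V) : Prop :=
  (G.induce (R ∪ S)).Connected

/-- `S` is a minimum Steiner set for terminal set `R` in `G`. -/
def IsMinSteinerSet {V : Type*} (G : SimpleGraph V) (R S : Set V) : Prop :=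
  IsSteinerSet G R S ∧ ∀ S' : Set V, IsSteinerSet G R S' → S.ncard ≤ S'.ncard

/-- The bipartite graph on `α ⊕ β` determined by the cross-adjacency relation `A`. -/
def biGraph {α β : Type*} (A : α → β → Prop) : SimpleGraph (α ⊕ β) where
  Adj u v := (∃ a b, u = .inl a ∧ v = .inr b ∧ A a b) ∨ (∃ a b, u = .inr b ∧ v = .inl a ∧ A a b)
  symm := ⟨by
    rintro u v (⟨a,b,h1,h2,h3⟩|⟨a,b,h1,h2,h3⟩)
    · exact Or.inr ⟨a,b,h2,h1,h3⟩
    · exact Or.inl ⟨a,b,h2,h1,h3⟩⟩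
  loopless := ⟨by rintro (a|b) (⟨x,y,h1,h2,_⟩|⟨x,y,h1,h2,_⟩) <;> simp_all⟩
/-- The vertex-cover reduction graph is a 1-star caterpillar convex bipartite graph:
with `X* = V₂ ⊕ V₃` (`Sum.inl` the pendants `y_{j1}, y_{j2}`, `Sum.inr` the backbone
`z_{j1}, z_{j2}`) and each `x_i ∈ Y* = V₁` adjacent to all of `V₃` and to `y_{j1}, y_{j2}`
for exactly the edges `e_j` incident to `v_i`, the 1-star caterpillar `T` on `X*` with
backbone `V₃` (in order `z_{11}, z_{12}, z_{21}, …`) and pendant `y_{jt}` attached to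
`z_{jt}` is a tree in which every neighborhood `N(x_i)` induces a connected subgraph. -/
theorem stmt14 {n m : ℕ} (hm : 1 ≤ m) (G : SimpleGraph (Fin n))
    (a b : Fin m → Fin n) (hedges : ∀ j, G.Adj (a j) (b j)) :
    (SimpleGraph.fromRel (fun u v : (Fin m × Fin 2) ⊕ (Fin m × Fin 2) =>
        (∃ s t : Fin m × Fin 2, u = .inr s ∧ v = .inr t ∧
          2 * (s.1 : ℕ) + (s.2 : ℕ) + 1 = 2 * (t.1 : ℕ) + (t.2 : ℕ)) ∨
        (∃ s : Fin m × Fin 2, u = .inl s ∧ v = .inr s))).IsTree ∧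
    ∀ i : Fin n,
      ((SimpleGraph.fromRel (fun u v : (Fin m × Fin 2) ⊕ (Fin m × Fin 2) =>
          (∃ s t : Fin m × Fin 2, u = .inr s ∧ v = .inr t ∧
            2 * (s.1 : ℕ) + (s.2 : ℕ) + 1 = 2 * (t.1 : ℕ) + (t.2 : ℕ)) ∨
          (∃ s : Fin m × Fin 2, u = .inl s ∧ v = .inr s))).induce
        {x : (Fin m × Fin 2) ⊕ (Fin m × Fin 2) |
          Sum.elim (fun jt => a jt.1 = i ∨ b jt.1 = i) (fun _ => True) x}).Connected := by
  exact ⟨caterpillar_isTree hm, fun i => induce_connected hm _ (fun s => trivial)⟩
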